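/- Let a, b ∈ ℂ with ab ≠ 0 and a² ≠ b², and let P = 4π²·a³b³/(a² − b²)³. Define for m ∈ ℕ (m large) the sequence P_m = P · [(1/m)^{8m}·(m² − a²)^{2m}·(m² − b²)^{2m}] · [m^{−10}·(m² − a²)^{5/2}·(m² − b²)^{5/2}] · [m^{10}·Γ(m+1)²/(Γ(m+1+14/3)·Γ(m+1+16/3))], where the exponents 2m and 8m are integer powers, the exponent 5/2 is the principal-branch complex power, and Γ is the Euler Gamma function. Then P_m converges to P = 4π²·a³b³/(a² − b²)³ as m → ∞. -/

import Mathlib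

open Filter Real Set

lemma tendsto_ratio_aux (c d : ℝ) :
    Tendsto (fun m : ℕ => ((m : ℝ) + c) / ((m : ℝ) + d)) atTop (nhds 1) := by
  have h1 : Tendsto (fun m : ℕ => (m : ℝ) + d) atTop atTop :=
    tendsto_atTop_add_const_right _ d tendsto_natCast_atTop_atTop
  have h2 : Tendsto (fun m : ℕ => 1 + (c - d) * ((m : ℝ) + d)⁻¹) atTop (nhds 1) := by
    simpa using tendsto_const_nhds.add (tendsto_const_nhds.mul h1.inv_tendsto_atTop)
  apply h2.congr'
  filter_upwards [h1.eventually_gt_atTop 0] with m hm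
  field_simp
  ring

lemma gamma_interp {p t : ℝ} (hp : 0 < p) (h0 : 0 ≤ t) (h1 : t ≤ 1) :
    Real.Gamma (p + t) ≤ Real.Gamma p ^ (1 - t) * Real.Gamma (p + 1) ^ t := by
  have key := Real.convexOn_log_Gamma.2 (mem_Ioi.mpr hp)
    (mem_Ioi.mpr (by linarith : (0:ℝ) < p + 1)) (by linarith : (0:ℝ) ≤ 1 - t) h0 (by ring)
  have hpt : (1 - t) • p + t • (p + 1) = p + t := by simp [smul_eq_mul]; ring
  rw [hpt] at key
  have hg1 := Real.Gamma_pos_of_pos hp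
  have hg2 := Real.Gamma_pos_of_pos (by linarith : (0:ℝ) < p + 1)
  have hg3 := Real.Gamma_pos_of_pos (by linarith : (0:ℝ) < p + t)
  simp only [Function.comp_apply, smul_eq_mul] at key
  calc Real.Gamma (p + t) = Real.exp (Real.log (Real.Gamma (p + t))) := (Real.exp_log hg3).symm
    _ ≤ Real.exp ((1 - t) * Real.log (Real.Gamma p) + t * Real.log (Real.Gamma (p + 1))) :=
        Real.exp_le_exp.mpr key
    _ = Real.Gamma p ^ (1 - t) * Real.Gamma (p + 1) ^ t := by
        rw [Real.exp_add, Real.rpow_def_of_pos hg1, Real.rpow_def_of_pos hg2]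
        ring_nf

lemma gamma_ratio_base {s : ℝ} (h0 : 0 < s) (h1 : s < 1) :
    Tendsto (fun m : ℕ => Real.Gamma ((m : ℝ) + 1 + s) / (Real.Gamma ((m : ℝ) + 1) * (m : ℝ) ^ s))
      atTop (nhds 1) := by
  have hub : Tendsto (fun m : ℕ => (((m : ℝ) + 1) / ((m : ℝ) + 0)) ^ s) atTop (nhds 1) := by
    simpa using (tendsto_ratio_aux 1 0).rpow_const (Or.inl one_ne_zero)
  have hlb : Tendsto (fun m : ℕ =>
      (((m : ℝ) + 1) / ((m : ℝ) + (1 + s))) ^ (1 - s) * (((m : ℝ) + 1) / ((m : ℝ) + 0)) ^ s)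
      atTop (nhds 1) := by
    simpa using ((tendsto_ratio_aux 1 (1 + s)).rpow_const (Or.inl one_ne_zero)).mul hub
  refine tendsto_of_tendsto_of_tendsto_of_le_of_le' hlb hub ?_ ?_ <;>
    filter_upwards [eventually_gt_atTop 0] with m hm
  · -- lower bound
    have hm' : (0:ℝ) < m := by exact_mod_cast hm
    set x : ℝ := (m : ℝ) + 1 with hx
    have hxpos : 0 < x := by positivity
    have hxs : 0 < x + s := by positivity
    have hg1 := Real.Gamma_pos_of_pos hxpos
    have hgs := Real.Gamma_pos_of_pos hxs
    -- Γ(x+1) ≤ Γ(x+s) * (x+s)^(1-s)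
    have key := gamma_interp hxs (by linarith : (0:ℝ) ≤ 1 - s) (by linarith)
    rw [show x + s + (1 - s) = x + 1 by ring] at key
    rw [Real.Gamma_add_one hxs.ne', Real.mul_rpow hxs.le hgs.le,
      show (1 - (1 - s)) = s by ring, mul_left_comm, ← Real.rpow_add hgs,
      show s + (1 - s) = 1 by ring, Real.rpow_one] at key
    -- key : Γ(x+1) ≤ (x+s)^(1-s) * Γ(x+s)
    rw [Real.Gamma_add_one hxpos.ne'] at key
    rw [show (m:ℝ) + (1 + s) = x + s by rw [hx]; ring]
    have hid : (x / (x + s)) ^ (1 - s) * (x / ((m:ℝ) + 0)) ^ s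
        = x / ((x + s) ^ (1 - s) * (m : ℝ) ^ s) := by
      rw [add_zero, Real.div_rpow hxpos.le hxs.le, Real.div_rpow hxpos.le hm'.le,
        div_mul_div_comm, ← Real.rpow_add hxpos, show (1 - s) + s = 1 by ring, Real.rpow_one]
    rw [hid, div_le_div_iff₀ (by positivity) (by positivity)]
    calc x * (Real.Gamma x * (m:ℝ) ^ s) = (x * Real.Gamma x) * (m:ℝ) ^ s := by ring
      _ ≤ ((x + s) ^ (1 - s) * Real.Gamma (x + s)) * (m:ℝ) ^ s := by
          apply mul_le_mul_of_nonneg_right key (by positivity)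
      _ = Real.Gamma (x + s) * ((x + s) ^ (1 - s) * (m:ℝ) ^ s) := by ring
  · -- upper bound
    have hm' : (0:ℝ) < m := by exact_mod_cast hm
    set x : ℝ := (m : ℝ) + 1 with hx
    have hxpos : 0 < x := by positivity
    have hg1 := Real.Gamma_pos_of_pos hxpos
    have key := gamma_interp hxpos h0.le h1.le
    rw [Real.Gamma_add_one hxpos.ne', Real.mul_rpow hxpos.le hg1.le, ← mul_assoc,
      mul_comm (Real.Gamma x ^ (1 - s)) (x ^ s), mul_assoc, ← Real.rpow_add hg1,
      show (1 - s) + s = 1 by ring, Real.rpow_one] at key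
    -- key : Γ(x+s) ≤ x^s * Γ(x)
    rw [div_le_iff₀ (by positivity), add_zero, Real.div_rpow hxpos.le hm'.le]
    calc Real.Gamma (x + s) ≤ x ^ s * Real.Gamma x := key
      _ = x ^ s / (m:ℝ) ^ s * (Real.Gamma x * (m:ℝ) ^ s) := by
          field_simp

lemma gamma_ratio_gen {s : ℝ} (h0 : 0 < s) (h1 : s < 1) (k : ℕ) :
    Tendsto (fun m : ℕ =>
      Real.Gamma ((m : ℝ) + 1 + (s + k)) / (Real.Gamma ((m : ℝ) + 1) * (m : ℝ) ^ (s + (k : ℝ))))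
      atTop (nhds 1) := by
  induction k with
  | zero => simpa using gamma_ratio_base h0 h1
  | succ k ih =>
    have key := ih.mul (tendsto_ratio_aux (1 + s + k) 0)
    rw [mul_one] at key
    apply key.congr'
    filter_upwards [eventually_gt_atTop 0] with m hm
    have hm' : (0:ℝ) < m := by exact_mod_cast hm
    have hne : (m:ℝ) + 1 + (s + k) ≠ 0 := by positivity
    have hG : Real.Gamma ((m : ℝ) + 1 + (s + (k + 1 : ℕ)))
        = ((m:ℝ) + 1 + (s + k)) * Real.Gamma ((m : ℝ) + 1 + (s + k)) := by
      rw [← Real.Gamma_add_one hne]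
      push_cast
      ring_nf
    have hpow : (m:ℝ) ^ (s + ((k + 1 : ℕ) : ℝ)) = (m:ℝ) ^ (s + (k:ℝ)) * m := by
      push_cast
      rw [show s + ((k:ℝ) + 1) = (s + k) + 1 by ring, Real.rpow_add_one hm'.ne']
    rw [hG, hpow]
    have hgpos := Real.Gamma_pos_of_pos (by positivity : (0:ℝ) < (m:ℝ) + 1)
    field_simp
    ring

lemma gamma_factor_tendsto :
    Tendsto (fun m : ℕ => ((m : ℝ) ^ 10 * Real.Gamma ((m:ℝ) + 1) ^ 2 /
      (Real.Gamma ((m:ℝ) + 1 + 14 / 3) * Real.Gamma ((m:ℝ) + 1 + 16 / 3)))) atTop (nhds 1) := by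
  have h14 := gamma_ratio_gen (by norm_num : (0:ℝ) < 2/3) (by norm_num) 4
  have h16 := gamma_ratio_gen (by norm_num : (0:ℝ) < 1/3) (by norm_num) 5
  rw [show (2/3 + ((4:ℕ):ℝ)) = 14/3 by norm_num] at h14
  rw [show (1/3 + ((5:ℕ):ℝ)) = 16/3 by norm_num] at h16
  have key := (h14.mul h16).inv₀ (by norm_num)
  rw [show ((1:ℝ) * 1)⁻¹ = 1 by norm_num] at key
  apply key.congr'
  filter_upwards [eventually_gt_atTop 0] with m hm
  have hm' : (0:ℝ) < m := by exact_mod_cast hm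
  have hg1 := Real.Gamma_pos_of_pos (by positivity : (0:ℝ) < (m:ℝ) + 1)
  have hg14 := Real.Gamma_pos_of_pos (by positivity : (0:ℝ) < (m:ℝ) + 1 + 14/3)
  have hg16 := Real.Gamma_pos_of_pos (by positivity : (0:ℝ) < (m:ℝ) + 1 + 16/3)
  have hpow : (m:ℝ) ^ (14/3 : ℝ) * (m:ℝ) ^ (16/3 : ℝ) = (m:ℝ) ^ (10:ℕ) := by
    rw [← Real.rpow_add hm', show (14/3 + 16/3 : ℝ) = ((10:ℕ):ℝ) by norm_num,
      Real.rpow_natCast]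
  have hp14 : (0:ℝ) < (m:ℝ) ^ (14/3 : ℝ) := Real.rpow_pos_of_pos hm' _
  have hp16 : (0:ℝ) < (m:ℝ) ^ (16/3 : ℝ) := Real.rpow_pos_of_pos hm' _
  rw [mul_inv, inv_div, inv_div, div_mul_div_comm,
    div_eq_div_iff (by positivity) (by positivity)]
  linear_combination Real.Gamma ((m:ℝ)+1)^2 *
    (Real.Gamma ((m:ℝ)+1+14/3) * Real.Gamma ((m:ℝ)+1+16/3)) * hpow

lemma inv_cast_tendsto : Tendsto (fun m : ℕ => ((m : ℂ))⁻¹) atTop (nhds 0) := by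
  have h := (Complex.continuous_ofReal.tendsto 0).comp tendsto_one_div_atTop_nhds_zero_nat
  simpa [Function.comp_def, one_div] using h


lemma pow_factor_tendsto (a b : ℂ) :
    Tendsto (fun m : ℕ => (1 / (m : ℂ)) ^ (8 * m) * ((m : ℂ) ^ 2 - a ^ 2) ^ (2 * m) *
      ((m : ℂ) ^ 2 - b ^ 2) ^ (2 * m)) atTop (nhds 1) := by
  set w : ℕ → ℂ := fun m => (1 / (m : ℂ)) ^ 4 * ((m : ℂ) ^ 2 - a ^ 2) * ((m : ℂ) ^ 2 - b ^ 2)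
    with hw
  have hsq : Tendsto (fun m : ℕ => ((m:ℝ)) ^ 2) atTop atTop :=
    (tendsto_pow_atTop two_ne_zero).comp tendsto_natCast_atTop_atTop
  have hev : ∀ᶠ m : ℕ in atTop, 1 ≤ m ∧ ‖a ^ 2‖ < (m:ℝ) ^ 2 ∧ ‖b ^ 2‖ < (m:ℝ) ^ 2 :=
    (eventually_ge_atTop 1).and ((hsq.eventually_gt_atTop ‖a ^ 2‖).and
      (hsq.eventually_gt_atTop ‖b ^ 2‖))
  have hg : Tendsto (fun m : ℕ => (m:ℂ) * (w m - 1)) atTop (nhds 0) := by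
    have lim : Tendsto (fun m : ℕ =>
        -(a^2 + b^2) * ((m:ℂ))⁻¹ + a^2 * b^2 * (((m:ℂ))⁻¹)^3) atTop (nhds 0) := by
      simpa using (tendsto_const_nhds.mul inv_cast_tendsto).add
        (tendsto_const_nhds.mul (inv_cast_tendsto.pow 3))
    apply lim.congr'
    filter_upwards [eventually_ge_atTop 1] with m hm
    have hm0 : (m:ℂ) ≠ 0 := Nat.cast_ne_zero.mpr (by omega)
    simp only [hw]
    field_simp
    ring
  have hw1 : Tendsto (fun m : ℕ => w m - 1) atTop (nhds 0) := by
    have := inv_cast_tendsto.mul hg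
    rw [zero_mul] at this
    apply this.congr'
    filter_upwards [eventually_ge_atTop 1] with m hm
    have hm0 : (m:ℂ) ≠ 0 := Nat.cast_ne_zero.mpr (by omega)
    field_simp
  have hsmall : ∀ᶠ m : ℕ in atTop, ‖w m - 1‖ ≤ 1/2 := by
    have := Metric.tendsto_nhds.mp hw1 (1/2) (by norm_num)
    filter_upwards [this] with m hm
    rw [dist_zero_right] at hm
    exact hm.le
  have hlog : Tendsto (fun m : ℕ => ((2*m : ℕ):ℂ) * Complex.log (w m)) atTop (nhds 0) := by
    apply squeeze_zero_norm' (a := fun m : ℕ => 3 * ‖(m:ℂ) * (w m - 1)‖)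
    · filter_upwards [hsmall] with m hm
      have h32 := Complex.norm_log_one_add_half_le_self hm
      rw [add_sub_cancel] at h32
      rw [norm_mul, norm_mul]
      have h1 : ‖((2*m : ℕ):ℂ)‖ = 2 * (m:ℝ) := by
        rw [Complex.norm_natCast]; push_cast; ring
      have h2 : ‖(m:ℂ)‖ = (m:ℝ) := Complex.norm_natCast m
      rw [h1, h2]
      nlinarith [norm_nonneg (Complex.log (w m)), Nat.cast_nonneg (α := ℝ) m,
        norm_nonneg (w m - 1)]
    · simpa using hg.norm.const_mul 3
  have hexp := (Complex.continuous_exp.tendsto 0).comp hlog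
  rw [Complex.exp_zero] at hexp
  apply hexp.congr'
  filter_upwards [hev] with m hm
  obtain ⟨hm1, ha, hb⟩ := hm
  have hm0 : (m:ℂ) ≠ 0 := Nat.cast_ne_zero.mpr (by omega)
  have hnm : ‖(m:ℂ)^2‖ = (m:ℝ)^2 := by rw [norm_pow, Complex.norm_natCast]
  have hA : (m:ℂ)^2 - a^2 ≠ 0 := by
    rw [sub_ne_zero]
    intro h
    rw [← h, hnm] at ha
    exact lt_irrefl _ ha
  have hB : (m:ℂ)^2 - b^2 ≠ 0 := by
    rw [sub_ne_zero]
    intro h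
    rw [← h, hnm] at hb
    exact lt_irrefl _ hb
  have hwne : w m ≠ 0 := by
    simp only [hw]
    exact mul_ne_zero (mul_ne_zero (pow_ne_zero _ (one_div_ne_zero hm0)) hA) hB
  show Complex.exp (((2*m : ℕ):ℂ) * Complex.log (w m)) = _
  rw [Complex.exp_nat_mul, Complex.exp_log hwne]
  simp only [hw]
  rw [mul_pow, mul_pow, ← pow_mul, show 4*(2*m) = 8*m by ring]

lemma log_one_sub_div_sq_tendsto (c : ℂ) :
    Tendsto (fun m : ℕ => Complex.log (1 - c / (m:ℂ)^2)) atTop (nhds 0) := by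
  have h1 : Tendsto (fun m : ℕ => 1 - c * (((m:ℂ))⁻¹)^2) atTop (nhds 1) := by
    simpa using tendsto_const_nhds.sub (tendsto_const_nhds.mul (inv_cast_tendsto.pow 2))
  have hc : ContinuousAt Complex.log 1 :=
    continuousAt_clog (by simp [Complex.mem_slitPlane_iff])
  have := hc.tendsto.comp h1
  rw [Complex.log_one] at this
  simpa [Function.comp_def, div_eq_mul_inv, inv_pow] using this

lemma cpow_factor_tendsto (a b : ℂ) :
    Tendsto (fun m : ℕ => ((m : ℂ) ^ 2 - a ^ 2) ^ ((5 : ℂ) / 2) *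
      ((m : ℂ) ^ 2 - b ^ 2) ^ ((5 : ℂ) / 2) / (m : ℂ) ^ (10 : ℕ)) atTop (nhds 1) := by
  have hsq : Tendsto (fun m : ℕ => ((m:ℝ)) ^ 2) atTop atTop :=
    (tendsto_pow_atTop two_ne_zero).comp tendsto_natCast_atTop_atTop
  have hev : ∀ᶠ m : ℕ in atTop, 1 ≤ m ∧ ‖a ^ 2‖ < (m:ℝ) ^ 2 ∧ ‖b ^ 2‖ < (m:ℝ) ^ 2 :=
    (eventually_ge_atTop 1).and ((hsq.eventually_gt_atTop ‖a ^ 2‖).and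
      (hsq.eventually_gt_atTop ‖b ^ 2‖))
  have hlim : Tendsto (fun m : ℕ =>
      (Complex.log (1 - a^2 / (m:ℂ)^2) + Complex.log (1 - b^2 / (m:ℂ)^2)) * ((5:ℂ)/2))
      atTop (nhds 0) := by
    simpa using ((log_one_sub_div_sq_tendsto (a^2)).add (log_one_sub_div_sq_tendsto (b^2))).mul
      tendsto_const_nhds
  have hexp := (Complex.continuous_exp.tendsto 0).comp hlim
  rw [Complex.exp_zero] at hexp
  apply hexp.congr'
  filter_upwards [hev] with m hm
  obtain ⟨hm1, ha, hb⟩ := hm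
  have hmR : (0:ℝ) < m := by exact_mod_cast hm1
  have hm0 : (m:ℂ) ≠ 0 := Nat.cast_ne_zero.mpr (by omega)
  have hnm : ‖(m:ℂ)^2‖ = (m:ℝ)^2 := by rw [norm_pow, Complex.norm_natCast]
  have hA : (m:ℂ)^2 - a^2 ≠ 0 := by
    rw [sub_ne_zero]; intro h; rw [← h, hnm] at ha; exact lt_irrefl _ ha
  have hB : (m:ℂ)^2 - b^2 ≠ 0 := by
    rw [sub_ne_zero]; intro h; rw [← h, hnm] at hb; exact lt_irrefl _ hb
  have h1a : (1 : ℂ) - a^2 / (m:ℂ)^2 ≠ 0 := by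
    intro h
    apply hA
    have : (m:ℂ)^2 - a^2 = (m:ℂ)^2 * (1 - a^2 / (m:ℂ)^2) := by field_simp
    rw [this, h, mul_zero]
  have h1b : (1 : ℂ) - b^2 / (m:ℂ)^2 ≠ 0 := by
    intro h
    apply hB
    have : (m:ℂ)^2 - b^2 = (m:ℂ)^2 * (1 - b^2 / (m:ℂ)^2) := by field_simp
    rw [this, h, mul_zero]
  have hlogA : Complex.log ((m:ℂ)^2 - a^2)
      = (Real.log ((m:ℝ)^2) : ℂ) + Complex.log (1 - a^2 / (m:ℂ)^2) := by
    have hrepr : (m:ℂ)^2 - a^2 = (((m:ℝ)^2 : ℝ) : ℂ) * (1 - a^2 / (m:ℂ)^2) := by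
      push_cast; field_simp
    rw [hrepr, Complex.log_ofReal_mul (by positivity) h1a]
  have hlogB : Complex.log ((m:ℂ)^2 - b^2)
      = (Real.log ((m:ℝ)^2) : ℂ) + Complex.log (1 - b^2 / (m:ℂ)^2) := by
    have hrepr : (m:ℂ)^2 - b^2 = (((m:ℝ)^2 : ℝ) : ℂ) * (1 - b^2 / (m:ℂ)^2) := by
      push_cast; field_simp
    rw [hrepr, Complex.log_ofReal_mul (by positivity) h1b]
  have hlogm : Complex.log (m:ℂ) = ((Real.log m : ℝ) : ℂ) := by
    rw [← Complex.ofReal_natCast, ← Complex.ofReal_log hmR.le]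
  show Complex.exp _ = _
  rw [Complex.cpow_def_of_ne_zero hA, Complex.cpow_def_of_ne_zero hB,
    show ((m:ℂ) ^ (10:ℕ)) = Complex.exp (((10:ℕ):ℂ) * Complex.log (m:ℂ)) by
      rw [Complex.exp_nat_mul, Complex.exp_log hm0],
    ← Complex.exp_add, ← Complex.exp_sub]
  congr 1
  rw [hlogA, hlogB, hlogm, Real.log_pow]
  push_cast
  ring



open Filter in
/-- Convergence of the period determinants `P_m` of the regular singular approximations
`∇₍ₘ₎` to the period determinant `P = 4π²a³b³/(a²-b²)³` of the irregular rank-2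
connection, where `a, b` are square roots of the critical values. -/
theorem tendsto_period_determinant_approximation (a b : ℂ)
    (hab : a * b ≠ 0) (hsq : a ^ 2 ≠ b ^ 2) :
    Tendsto (fun m : ℕ =>
        (4 * (Real.pi : ℂ) ^ 2 * a ^ 3 * b ^ 3 / (a ^ 2 - b ^ 2) ^ 3) *
          ((1 / (m : ℂ)) ^ (8 * m) * ((m : ℂ) ^ 2 - a ^ 2) ^ (2 * m) *
            ((m : ℂ) ^ 2 - b ^ 2) ^ (2 * m)) *
          (((m : ℂ) ^ 2 - a ^ 2) ^ ((5 : ℂ) / 2) *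
            ((m : ℂ) ^ 2 - b ^ 2) ^ ((5 : ℂ) / 2) / (m : ℂ) ^ (10 : ℕ)) *
          (((m : ℝ) ^ 10 * Real.Gamma (m + 1) ^ 2 /
            (Real.Gamma (m + 1 + 14 / 3) * Real.Gamma (m + 1 + 16 / 3)) : ℝ) : ℂ))
      atTop (nhds (4 * (Real.pi : ℂ) ^ 2 * a ^ 3 * b ^ 3 / (a ^ 2 - b ^ 2) ^ 3)) := by
  have h1 := pow_factor_tendsto a b
  have h2 := cpow_factor_tendsto a b
  have h3 := (Complex.continuous_ofReal.tendsto 1).comp gamma_factor_tendsto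
  rw [Complex.ofReal_one] at h3
  have key := (((tendsto_const_nhds
    (x := 4 * (Real.pi : ℂ) ^ 2 * a ^ 3 * b ^ 3 / (a ^ 2 - b ^ 2) ^ 3)
    (f := atTop (α := ℕ))).mul h1).mul h2).mul h3
  simpa [Function.comp_def] using key
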